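/- (Special values of the spectral zeta function at non-positive integers in terms of heat-kernel coefficients.) Let d, n ∈ ℕ, set K := 2n + d, let δ > 0 and C ≥ 0, and let F : (0, ∞) → ℂ be locally integrable with |F(τ)| ≤ C e^{−δτ} for all τ ≥ 1, and suppose b_0, …, b_K ∈ ℂ satisfy F(τ) − Σ_{k=0}^{K} b_k τ^{(k−d)/2} = O(τ^{(K+1−d)/2}) as τ → 0⁺. Define G(ν) := ∫_0^1 τ^{ν−1} (F(τ) − Σ_{k=0}^{K} b_k τ^{(k−d)/2}) dτ + Σ_{k=0}^{K} b_k/(ν + (k−d)/2) + ∫_1^∞ τ^{ν−1} F(τ) dτ. Then: (i) for every ν ∈ ℂ with Re ν > d/2, G(ν) = ∫_0^∞ τ^{ν−1} F(τ) dτ; and (ii) lim_{ν → −n} G(ν)/Γ(ν) = (−1)^n · n! · b_{2n+d}. -/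

import Mathlib

open MeasureTheory Complex Filter

private lemma invGamma_step (s : ℂ) :
    (Complex.Gamma s)⁻¹ = s * (Complex.Gamma (s + 1))⁻¹ := by
  by_cases hs : s = 0
  · simp [hs, Complex.Gamma_zero]
  · rw [Complex.Gamma_add_one s hs, mul_inv, ← mul_assoc, mul_inv_cancel₀ hs, one_mul]

private lemma invGamma_prod (m : ℕ) (s : ℂ) :
    (Complex.Gamma s)⁻¹ = (∏ j ∈ Finset.range m, (s + j)) * (Complex.Gamma (s + m))⁻¹ := by
  induction m with
  | zero => simp
  | succ m ih =>
    rw [Finset.prod_range_succ, ih, invGamma_step (s + m)]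
    push_cast
    rw [mul_assoc, add_assoc]

private lemma prod_neg_nat (n : ℕ) :
    (∏ j ∈ Finset.range n, ((-(n : ℂ)) + j)) = (-1) ^ n * n.factorial := by
  have h1 : ∀ j ∈ Finset.range n, (-(n : ℂ)) + j = (-1) * ((n : ℂ) - j) := by
    intro j _; ring
  rw [Finset.prod_congr rfl h1, Finset.prod_mul_distrib, Finset.prod_const, Finset.card_range]
  congr 1
  have h2 : ∀ j ∈ Finset.range n, ((n : ℂ) - j) = (((n - j : ℕ) : ℂ)) := by
    intro j hj
    rw [Nat.cast_sub (le_of_lt (Finset.mem_range.mp hj))]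
  rw [Finset.prod_congr rfl h2, ← Nat.cast_prod]
  congr 1
  calc ∏ j ∈ Finset.range n, (n - j) = ∏ j ∈ Finset.range n, (j + 1) := by
        rw [← Finset.prod_range_reflect]
        refine Finset.prod_congr rfl fun j hj => ?_
        have := Finset.mem_range.mp hj; omega
    _ = n.factorial := Finset.prod_range_add_one_eq_factorial n

set_option maxHeartbeats 2000000 in
/-- Special values of the spectral zeta function at non-positive integers in
terms of heat-kernel coefficients. With `K = 2n + d`, `F` locally integrable on `(0,∞)`,
exponentially decaying at infinity, and `F(τ) = ∑_{k=0}^K b_k τ^{(k−d)/2} + O(τ^{(K+1−d)/2})`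
as `τ → 0⁺`, the function
`G(ν) = ∫_0^1 τ^{ν−1}(F(τ) − ∑_{k=0}^K b_k τ^{(k−d)/2}) dτ + ∑_{k=0}^K b_k/(ν+(k−d)/2)
  + ∫_1^∞ τ^{ν−1} F(τ) dτ`
satisfies `G(ν) = ∫_0^∞ τ^{ν−1} F(τ) dτ` for `Re ν > d/2` and
`lim_{ν→−n} G(ν)/Γ(ν) = (−1)ⁿ n! b_{2n+d}`. -/
theorem stmt19 (d n : ℕ) (δ C : ℝ) (hδ : 0 < δ) (hC : 0 ≤ C)
    (F : ℝ → ℂ) (b : ℕ → ℂ)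
    (hloc : LocallyIntegrableOn F (Set.Ioi 0))
    (hdecay : ∀ τ : ℝ, 1 ≤ τ → ‖F τ‖ ≤ C * Real.exp (-δ * τ))
    (hasymp : (fun τ : ℝ =>
        F τ - ∑ k ∈ Finset.range (2 * n + d + 1), b k * (τ : ℂ) ^ (((k : ℂ) - (d : ℂ)) / 2))
      =O[nhdsWithin 0 (Set.Ioi 0)]
        fun τ : ℝ => τ ^ ((((2 * n + d : ℕ) : ℝ) + 1 - (d : ℝ)) / 2))
    (G : ℂ → ℂ)
    (hG : ∀ ν : ℂ, G ν =
      (∫ τ in Set.Ioc (0 : ℝ) 1, (τ : ℂ) ^ (ν - 1) *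
          (F τ - ∑ k ∈ Finset.range (2 * n + d + 1),
            b k * (τ : ℂ) ^ (((k : ℂ) - (d : ℂ)) / 2)))
        + (∑ k ∈ Finset.range (2 * n + d + 1), b k / (ν + ((k : ℂ) - (d : ℂ)) / 2))
        + ∫ τ in Set.Ioi (1 : ℝ), (τ : ℂ) ^ (ν - 1) * F τ) :
    (∀ ν : ℂ, (d : ℝ) / 2 < ν.re →
      G ν = ∫ τ in Set.Ioi (0 : ℝ), (τ : ℂ) ^ (ν - 1) * F τ) ∧
    Filter.Tendsto (fun ν : ℂ => G ν / Complex.Gamma ν)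
      (nhdsWithin (-(n : ℂ)) {(-(n : ℂ))}ᶜ)
      (nhds ((-1 : ℂ) ^ n * (n.factorial : ℂ) * b (2 * n + d))) := by
  set S : ℝ → ℂ := fun τ =>
    ∑ k ∈ Finset.range (2 * n + d + 1), b k * (τ : ℂ) ^ (((k : ℂ) - (d : ℂ)) / 2) with hSdef
  set g : ℝ → ℂ := fun τ => F τ - S τ with hgdef
  have hG' : ∀ ν : ℂ, G ν =
      (∫ τ in Set.Ioc (0 : ℝ) 1, (τ : ℂ) ^ (ν - 1) * g τ)
        + (∑ k ∈ Finset.range (2 * n + d + 1), b k / (ν + ((k : ℂ) - (d : ℂ)) / 2))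
        + ∫ τ in Set.Ioi (1 : ℝ), (τ : ℂ) ^ (ν - 1) * F τ := hG
  have hasymp' : g =O[nhdsWithin 0 (Set.Ioi 0)]
      fun τ : ℝ => τ ^ ((((2 * n + d : ℕ) : ℝ) + 1 - (d : ℝ)) / 2) := hasymp
  clear hG hasymp
  -- continuity of cpow
  have hcpowc : ∀ w : ℂ, ContinuousOn (fun τ : ℝ => (τ : ℂ) ^ w) (Set.Ioi 0) := by
    intro w τ hτ
    exact ((continuousAt_cpow_const (Complex.ofReal_mem_slitPlane.2 hτ)).comp
      Complex.continuous_ofReal.continuousAt).continuousWithinAt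
  -- measurability
  have hFm : AEStronglyMeasurable F (volume.restrict (Set.Ioi (0 : ℝ))) :=
    hloc.aestronglyMeasurable
  have hScont : ContinuousOn S (Set.Ioi (0 : ℝ)) := by
    refine continuousOn_finset_sum _ fun k _ => continuousOn_const.mul (hcpowc _)
  have hgm : AEStronglyMeasurable g (volume.restrict (Set.Ioi (0 : ℝ))) :=
    hFm.sub (hScont.aestronglyMeasurable measurableSet_Ioi)
  -- the small-τ bound
  obtain ⟨c₀, hc₀, hbig⟩ := hasymp'.exists_nonneg
  obtain ⟨ε, hε, hε1, hsm⟩ : ∃ ε : ℝ, 0 < ε ∧ ε ≤ 1 ∧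
      ∀ τ : ℝ, τ ∈ Set.Ioc 0 ε → ‖g τ‖ ≤ c₀ * τ ^ ((n : ℝ) + 1 / 2) := by
    have hbd := hbig.bound
    rw [eventually_nhdsWithin_iff, Metric.eventually_nhds_iff] at hbd
    obtain ⟨ε0, hε0, hball⟩ := hbd
    refine ⟨min (ε0 / 2) 1, by positivity, min_le_right _ _, fun τ hτ => ?_⟩
    have hτ0 : 0 < τ := hτ.1
    have hτε : τ < ε0 := by
      have h1 := hτ.2
      have h2 : min (ε0 / 2) 1 ≤ ε0 / 2 := min_le_left _ _
      linarith
    have h2 := hball (y := τ) (by rw [Real.dist_eq, sub_zero, abs_of_pos hτ0]; exact hτε) hτ0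
    have hE : ((((2 * n + d : ℕ) : ℝ) + 1 - (d : ℝ)) / 2) = (n : ℝ) + 1 / 2 := by
      push_cast; ring
    rw [hE] at h2
    calc ‖g τ‖ ≤ c₀ * ‖τ ^ ((n : ℝ) + 1 / 2)‖ := h2
      _ = c₀ * τ ^ ((n : ℝ) + 1 / 2) := by
          rw [Real.norm_eq_abs, _root_.abs_of_nonneg (Real.rpow_nonneg hτ0.le _)]
  -- integrability of τ^p * ‖g τ‖ near 0
  have hgint : ∀ p : ℝ, -(n : ℝ) - 3 / 2 < p →
      IntegrableOn (fun τ : ℝ => τ ^ p * ‖g τ‖) (Set.Ioc (0 : ℝ) 1) := by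
    intro p hp
    have hrc : ContinuousOn (fun τ : ℝ => τ ^ p) (Set.Ioi 0) := fun τ hτ =>
      (Real.continuousAt_rpow_const τ p (Or.inl (ne_of_gt hτ))).continuousWithinAt
    have hmeas : AEStronglyMeasurable (fun τ : ℝ => τ ^ p * ‖g τ‖)
        (volume.restrict (Set.Ioi (0 : ℝ))) :=
      (hrc.aestronglyMeasurable measurableSet_Ioi).mul hgm.norm
    rw [← Set.Ioc_union_Ioc_eq_Ioc hε.le hε1]
    refine IntegrableOn.union ?_ ?_
    · refine Integrable.mono' (g := fun τ => c₀ * τ ^ (p + ((n : ℝ) + 1 / 2)))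
        ?_ ?_ ?_
      · exact ((intervalIntegrable_iff_integrableOn_Ioc_of_le hε.le).mp
          (intervalIntegral.intervalIntegrable_rpow' (by push_cast; linarith))).const_mul c₀
      · exact hmeas.mono_measure
          (Measure.restrict_mono (fun x hx => hx.1) le_rfl)
      · rw [ae_restrict_iff' measurableSet_Ioc]
        refine ae_of_all _ fun τ hτ => ?_
        have hτ0 : 0 < τ := hτ.1
        have h1 : ‖τ ^ p * ‖g τ‖‖ = τ ^ p * ‖g τ‖ := by
          rw [Real.norm_eq_abs, _root_.abs_of_nonneg
            (mul_nonneg (Real.rpow_nonneg hτ0.le _) (norm_nonneg _))]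
        rw [h1]
        show _ ≤ c₀ * τ ^ (p + ((n : ℝ) + 1 / 2))
        calc τ ^ p * ‖g τ‖ ≤ τ ^ p * (c₀ * τ ^ ((n : ℝ) + 1 / 2)) :=
              mul_le_mul_of_nonneg_left (hsm τ ⟨hτ0, hτ.2⟩) (Real.rpow_nonneg hτ0.le _)
          _ = c₀ * τ ^ (p + ((n : ℝ) + 1 / 2)) := by
              rw [Real.rpow_add hτ0 p ((n : ℝ) + 1 / 2), mul_left_comm]
    · have hgI : IntegrableOn g (Set.Icc ε 1) := by
        have hFI : IntegrableOn F (Set.Icc ε 1) :=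
          hloc.integrableOn_compact_subset
            (fun x hx => lt_of_lt_of_le hε hx.1) isCompact_Icc
        have hSI : IntegrableOn S (Set.Icc ε 1) :=
          (hScont.mono (fun x hx => lt_of_lt_of_le hε hx.1)).integrableOn_Icc
        exact hFI.sub hSI
      refine Integrable.mono' (g := fun τ => (ε ^ p + 1) * ‖g τ‖) ?_ ?_ ?_
      · exact IntegrableOn.mono_set ((hgI.norm).const_mul _) Set.Ioc_subset_Icc_self
      · exact hmeas.mono_measure
          (Measure.restrict_mono (fun x hx => lt_of_lt_of_le hε (le_of_lt hx.1)) le_rfl)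
      · rw [ae_restrict_iff' measurableSet_Ioc]
        refine ae_of_all _ fun τ hτ => ?_
        have hτ0 : 0 < τ := lt_trans hε hτ.1
        have h1 : ‖τ ^ p * ‖g τ‖‖ = τ ^ p * ‖g τ‖ := by
          rw [Real.norm_eq_abs, _root_.abs_of_nonneg
            (mul_nonneg (Real.rpow_nonneg hτ0.le _) (norm_nonneg _))]
        rw [h1]
        show _ ≤ (ε ^ p + 1) * ‖g τ‖
        have h2 : τ ^ p ≤ ε ^ p + 1 := by
          by_cases hp0 : 0 ≤ p
          · have h3 : τ ^ p ≤ 1 := Real.rpow_le_one hτ0.le hτ.2 hp0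
            have h4 : (0 : ℝ) ≤ ε ^ p := Real.rpow_nonneg hε.le _
            linarith
          · have h3 : τ ^ p ≤ ε ^ p :=
              Real.rpow_le_rpow_of_nonpos hε (le_of_lt hτ.1)
                (le_of_lt (not_le.mp hp0))
            linarith
        exact mul_le_mul_of_nonneg_right h2 (norm_nonneg _)
  -- integrability of the complex integrand on Ioc 0 1
  have hIg : ∀ ν : ℂ, -(n : ℝ) - 1 / 2 < ν.re →
      IntegrableOn (fun τ : ℝ => (τ : ℂ) ^ (ν - 1) * g τ) (Set.Ioc (0 : ℝ) 1) := by
    intro ν hν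
    refine Integrable.mono' (hgint (ν.re - 1) (by linarith)) ?_ ?_
    · exact (((hcpowc (ν - 1)).aestronglyMeasurable measurableSet_Ioi).mul hgm).mono_measure
        (Measure.restrict_mono (fun x hx => hx.1) le_rfl)
    · rw [ae_restrict_iff' measurableSet_Ioc]
      refine ae_of_all _ fun τ hτ => ?_
      have hτ0 : 0 < τ := hτ.1
      rw [norm_mul, Complex.norm_cpow_eq_rpow_re_of_pos hτ0,
        Complex.sub_re, Complex.one_re]
  -- integrability on Ioi 1
  have hIinf : ∀ ν : ℂ,
      IntegrableOn (fun τ : ℝ => (τ : ℂ) ^ (ν - 1) * F τ) (Set.Ioi (1 : ℝ)) := by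
    intro ν
    set p : ℝ := ν.re - 1 with hpdef
    have hBcont : ContinuousOn (fun τ : ℝ => τ ^ p * (C * Real.exp (-δ * τ)))
        (Set.Ici 1) := by
      refine ContinuousOn.mul (fun τ hτ => ?_) (Continuous.continuousOn (by continuity))
      exact (Real.continuousAt_rpow_const τ p
        (Or.inl (ne_of_gt (lt_of_lt_of_le one_pos hτ)))).continuousWithinAt
    have hev : ∀ᶠ τ : ℝ in atTop, τ ^ p * Real.exp (-(δ / 2) * τ) ≤ 1 := by
      have ht := tendsto_rpow_mul_exp_neg_mul_atTop_nhds_zero p (δ / 2) (half_pos hδ)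
      exact ht.eventually (eventually_le_nhds one_pos)
    have hBO : (fun τ : ℝ => τ ^ p * (C * Real.exp (-δ * τ))) =O[atTop]
        fun τ => Real.exp (-(δ / 2) * τ) := by
      rw [Asymptotics.isBigO_iff]
      refine ⟨C, ?_⟩
      filter_upwards [hev, eventually_ge_atTop (1 : ℝ)] with τ h1 h2
      have hτ0 : (0 : ℝ) < τ := lt_of_lt_of_le one_pos h2
      have he : Real.exp (-δ * τ) = Real.exp (-(δ / 2) * τ) * Real.exp (-(δ / 2) * τ) := by
        rw [← Real.exp_add]; ring_nf
      rw [Real.norm_eq_abs, Real.norm_eq_abs, _root_.abs_of_nonneg (by positivity),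
        _root_.abs_of_nonneg (Real.exp_pos _).le, he]
      nlinarith [Real.exp_pos (-(δ / 2) * τ), Real.rpow_nonneg hτ0.le p,
        mul_le_mul_of_nonneg_right h1 (Real.exp_pos (-(δ / 2) * τ)).le]
    have hBint : IntegrableOn (fun τ : ℝ => τ ^ p * (C * Real.exp (-δ * τ)))
        (Set.Ioi 1) := integrable_of_isBigO_exp_neg (half_pos hδ) hBcont hBO
    refine Integrable.mono' hBint ?_ ?_
    · exact (((hcpowc (ν - 1)).aestronglyMeasurable measurableSet_Ioi).mul hFm).mono_measure
        (Measure.restrict_mono (Set.Ioi_subset_Ioi zero_le_one) le_rfl)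
    · rw [ae_restrict_iff' measurableSet_Ioi]
      refine ae_of_all _ fun τ hτ => ?_
      have hτ1 : (1 : ℝ) ≤ τ := le_of_lt hτ
      have hτ0 : (0 : ℝ) < τ := lt_of_lt_of_le one_pos hτ1
      rw [norm_mul,
        Complex.norm_cpow_eq_rpow_re_of_pos hτ0, Complex.sub_re, Complex.one_re]
      exact mul_le_mul_of_nonneg_left (hdecay τ hτ1) (Real.rpow_nonneg hτ0.le _)
  have hck : ∀ k : ℕ, ((k : ℂ) - (d : ℂ)) / 2 = ((((k : ℝ) - (d : ℝ)) / 2 : ℝ) : ℂ) :=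
    fun k => by push_cast; ring
  constructor
  · intro ν hν
    have hd0 : (0 : ℝ) ≤ (d : ℝ) / 2 := by positivity
    have hν0 : 0 < ν.re := lt_of_le_of_lt hd0 hν
    have hrepos : ∀ k : ℕ, 0 < (ν + ((k : ℂ) - (d : ℂ)) / 2).re := by
      intro k
      rw [hck k, Complex.add_re, Complex.ofReal_re]
      have hk0 : (0 : ℝ) ≤ (k : ℝ) := Nat.cast_nonneg k
      linarith
    have hrpos : ∀ k : ℕ, -1 < (ν + ((k : ℂ) - (d : ℂ)) / 2 - 1).re := by
      intro k
      rw [Complex.sub_re, Complex.one_re]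
      linarith [hrepos k]
    have hIk : ∀ k ∈ Finset.range (2 * n + d + 1),
        IntegrableOn (fun τ : ℝ => b k * (τ : ℂ) ^ (ν + ((k : ℂ) - (d : ℂ)) / 2 - 1))
          (Set.Ioc (0 : ℝ) 1) := fun k _ =>
      ((intervalIntegrable_iff_integrableOn_Ioc_of_le zero_le_one).mp
        (intervalIntegral.intervalIntegrable_cpow' (hrpos k))).const_mul (b k)
    have hIkval : ∀ k ∈ Finset.range (2 * n + d + 1),
        (∫ τ in Set.Ioc (0 : ℝ) 1, b k * (τ : ℂ) ^ (ν + ((k : ℂ) - (d : ℂ)) / 2 - 1))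
          = b k / (ν + ((k : ℂ) - (d : ℂ)) / 2) := by
      intro k _
      have hne : ν + ((k : ℂ) - (d : ℂ)) / 2 ≠ 0 := by
        intro h
        have h0 : (ν + ((k : ℂ) - (d : ℂ)) / 2).re = 0 := by rw [h]; rfl
        linarith [hrepos k]
      rw [MeasureTheory.integral_const_mul, ← intervalIntegral.integral_of_le zero_le_one,
        integral_cpow (Or.inl (hrpos k))]
      have h3 : ν + ((k : ℂ) - (d : ℂ)) / 2 - 1 + 1 = ν + ((k : ℂ) - (d : ℂ)) / 2 := by ring
      rw [h3, Complex.ofReal_one, Complex.ofReal_zero, Complex.one_cpow, Complex.zero_cpow hne, sub_zero, mul_one_div]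
    have hEq : Set.EqOn (fun τ : ℝ => (τ : ℂ) ^ (ν - 1) * F τ)
        (fun τ : ℝ => (τ : ℂ) ^ (ν - 1) * g τ + ∑ k ∈ Finset.range (2 * n + d + 1),
          b k * (τ : ℂ) ^ (ν + ((k : ℂ) - (d : ℂ)) / 2 - 1)) (Set.Ioc (0 : ℝ) 1) := by
      intro τ hτ
      have hτ0 : (τ : ℂ) ≠ 0 := Complex.ofReal_ne_zero.mpr (ne_of_gt hτ.1)
      have hkexp : ∀ k : ℕ, (τ : ℂ) ^ (ν + ((k : ℂ) - (d : ℂ)) / 2 - 1)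
          = (τ : ℂ) ^ (ν - 1) * (τ : ℂ) ^ (((k : ℂ) - (d : ℂ)) / 2) := by
        intro k
        rw [show ν + ((k : ℂ) - (d : ℂ)) / 2 - 1 = (ν - 1) + ((k : ℂ) - (d : ℂ)) / 2 by ring,
          Complex.cpow_add _ _ hτ0]
      simp only [hkexp, hgdef, hSdef]
      have hms : ∑ k ∈ Finset.range (2 * n + d + 1),
          b k * ((τ : ℂ) ^ (ν - 1) * (τ : ℂ) ^ (((k : ℂ) - (d : ℂ)) / 2))
          = (τ : ℂ) ^ (ν - 1) * ∑ k ∈ Finset.range (2 * n + d + 1),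
            b k * (τ : ℂ) ^ (((k : ℂ) - (d : ℂ)) / 2) := by
        rw [Finset.mul_sum]
        exact Finset.sum_congr rfl fun k _ => by ring
      rw [hms]
      ring
    have hνn : -(n : ℝ) - 1 / 2 < ν.re := by
      have : (0 : ℝ) ≤ (n : ℝ) := Nat.cast_nonneg n
      linarith
    have h01sum : IntegrableOn (fun τ : ℝ => (τ : ℂ) ^ (ν - 1) * g τ
        + ∑ k ∈ Finset.range (2 * n + d + 1),
          b k * (τ : ℂ) ^ (ν + ((k : ℂ) - (d : ℂ)) / 2 - 1)) (Set.Ioc (0 : ℝ) 1) :=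
      (hIg ν hνn).add (integrable_finset_sum _ hIk)
    have h01F : IntegrableOn (fun τ : ℝ => (τ : ℂ) ^ (ν - 1) * F τ) (Set.Ioc (0 : ℝ) 1) :=
      h01sum.congr_fun hEq.symm measurableSet_Ioc
    rw [hG' ν, ← Set.Ioc_union_Ioi_eq_Ioi (zero_le_one (α := ℝ)),
      setIntegral_union Set.Ioc_disjoint_Ioi_same measurableSet_Ioi h01F (hIinf ν)]
    congr 1
    rw [setIntegral_congr_fun measurableSet_Ioc hEq,
      integral_add (hIg ν hνn) (integrable_finset_sum _ hIk), integral_finset_sum _ hIk]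
    congr 1
    exact Finset.sum_congr rfl fun k hk => (hIkval k hk).symm
  · -- part (ii)
    have hcK : (((2 * n + d : ℕ) : ℂ) - (d : ℂ)) / 2 = (n : ℂ) := by push_cast; ring
    have hball : Complex.re ⁻¹' Set.Ioo (-(n : ℝ) - 1 / 4) (-(n : ℝ) + 1 / 4)
        ∈ nhds (-(n : ℂ)) := by
      refine (isOpen_Ioo.preimage Complex.continuous_re).mem_nhds ?_
      simp only [Set.mem_preimage, Complex.neg_re, Complex.natCast_re, Set.mem_Ioo]
      constructor <;> norm_num
    -- continuity of the Ioc integral at -n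
    have hI0cont : ContinuousAt
        (fun ν : ℂ => ∫ τ in Set.Ioc (0 : ℝ) 1, (τ : ℂ) ^ (ν - 1) * g τ) (-(n : ℂ)) := by
      have hbint : Integrable (fun τ : ℝ => τ ^ (-(n : ℝ) - 5 / 4) * ‖g τ‖)
          (volume.restrict (Set.Ioc (0 : ℝ) 1)) := hgint _ (by linarith)
      refine continuousAt_of_dominated ?_ ?_ hbint ?_
      · refine Eventually.of_forall fun ν => ?_
        exact (((hcpowc (ν - 1)).aestronglyMeasurable measurableSet_Ioi).mul hgm).mono_measure
          (Measure.restrict_mono Set.Ioc_subset_Ioi_self le_rfl)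
      · filter_upwards [hball] with ν hν
        rw [ae_restrict_iff' measurableSet_Ioc]
        refine ae_of_all _ fun τ hτ => ?_
        have hτ0 : 0 < τ := hτ.1
        rw [norm_mul, Complex.norm_cpow_eq_rpow_re_of_pos hτ0,
          Complex.sub_re, Complex.one_re]
        refine mul_le_mul_of_nonneg_right ?_ (norm_nonneg _)
        have h1 : -(n : ℝ) - 1 / 4 < ν.re := hν.1
        exact Real.rpow_le_rpow_of_exponent_ge hτ0 hτ.2 (by linarith)
      · rw [ae_restrict_iff' measurableSet_Ioc]
        refine ae_of_all _ fun τ hτ => ?_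
        have hτ0 : (τ : ℂ) ≠ 0 := Complex.ofReal_ne_zero.mpr (ne_of_gt hτ.1)
        exact ((continuousAt_const_cpow hτ0).comp
          (continuousAt_id.sub continuousAt_const)).mul continuousAt_const
    -- continuity of the Ioi integral at -n
    have hIinfcont : ContinuousAt
        (fun ν : ℂ => ∫ τ in Set.Ioi (1 : ℝ), (τ : ℂ) ^ (ν - 1) * F τ) (-(n : ℂ)) := by
      have hbint : Integrable (fun τ : ℝ => C * Real.exp (-δ * τ))
          (volume.restrict (Set.Ioi (1 : ℝ))) := (exp_neg_integrableOn_Ioi 1 hδ).const_mul C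
      refine continuousAt_of_dominated ?_ ?_ hbint ?_
      · refine Eventually.of_forall fun ν => ?_
        exact (((hcpowc (ν - 1)).aestronglyMeasurable measurableSet_Ioi).mul hFm).mono_measure
          (Measure.restrict_mono (Set.Ioi_subset_Ioi zero_le_one) le_rfl)
      · filter_upwards [hball] with ν hν
        rw [ae_restrict_iff' measurableSet_Ioi]
        refine ae_of_all _ fun τ hτ => ?_
        have hτ1 : (1 : ℝ) ≤ τ := le_of_lt hτ
        have hτ0 : (0 : ℝ) < τ := lt_of_lt_of_le one_pos hτ1
        rw [norm_mul,
          Complex.norm_cpow_eq_rpow_re_of_pos hτ0, Complex.sub_re, Complex.one_re]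
        have h2 : ν.re < -(n : ℝ) + 1 / 4 := hν.2
        have h3 : τ ^ (ν.re - 1) ≤ 1 := by
          refine Real.rpow_le_one_of_one_le_of_nonpos hτ1 ?_
          have : (0 : ℝ) ≤ (n : ℝ) := Nat.cast_nonneg n
          linarith
        calc τ ^ (ν.re - 1) * ‖F τ‖
            ≤ 1 * (C * Real.exp (-δ * τ)) := by
              refine mul_le_mul h3 (hdecay τ hτ1) (norm_nonneg _) one_pos.le
          _ = C * Real.exp (-δ * τ) := one_mul _
      · rw [ae_restrict_iff' measurableSet_Ioi]
        refine ae_of_all _ fun τ hτ => ?_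
        have hτ0 : (τ : ℂ) ≠ 0 :=
          Complex.ofReal_ne_zero.mpr (ne_of_gt (lt_of_lt_of_le one_pos (le_of_lt hτ)))
        exact ((continuousAt_const_cpow hτ0).comp
          (continuousAt_id.sub continuousAt_const)).mul continuousAt_const
    -- continuity of the truncated sum at -n
    have hsumcont : ContinuousAt (fun ν : ℂ => ∑ k ∈ Finset.range (2 * n + d),
        b k / (ν + ((k : ℂ) - (d : ℂ)) / 2)) (-(n : ℂ)) := by
      have hterm : ∀ k ∈ Finset.range (2 * n + d),
          ContinuousAt (fun ν : ℂ => b k / (ν + ((k : ℂ) - (d : ℂ)) / 2)) (-(n : ℂ)) := by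
        intro k hk
        have hkK : k ≠ 2 * n + d := Nat.ne_of_lt (Finset.mem_range.mp hk)
        have hne : (-(n : ℂ)) + ((k : ℂ) - (d : ℂ)) / 2 ≠ 0 := by
          intro h
          apply hkK
          have h2 : (k : ℂ) = ((2 * n + d : ℕ) : ℂ) := by
            push_cast
            linear_combination 2 * h
          exact_mod_cast h2
        exact continuousAt_const.div (continuousAt_id.add continuousAt_const) hne
      exact tendsto_finset_sum _ hterm
    -- inverse Gamma facts
    have hGinvCont : Continuous (fun s : ℂ => (Complex.Gamma s)⁻¹) := by
      have := Complex.differentiable_one_div_Gamma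
      simpa [one_div] using this.continuous
    have hGneg : Complex.Gamma (-(n : ℂ)) = 0 := Complex.Gamma_neg_nat_eq_zero n
    -- the residue of 1/((ν+n) Γ(ν)) at -n
    have hresidue : Tendsto (fun ν : ℂ => (ν + n)⁻¹ * (Complex.Gamma ν)⁻¹)
        (nhdsWithin (-(n : ℂ)) {(-(n : ℂ))}ᶜ)
        (nhds ((-1 : ℂ) ^ n * n.factorial)) := by
      have haux : ContinuousAt (fun ν : ℂ =>
          (∏ j ∈ Finset.range n, (ν + j)) * (Complex.Gamma (ν + ((n : ℂ) + 1)))⁻¹)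
          (-(n : ℂ)) := by
        refine ContinuousAt.mul (tendsto_finset_prod _ fun j _ =>
          continuousAt_id.add continuousAt_const) ?_
        exact (hGinvCont.continuousAt).comp (continuousAt_id.add continuousAt_const)
      have hval : (∏ j ∈ Finset.range n, ((-(n : ℂ)) + j))
          * (Complex.Gamma ((-(n : ℂ)) + ((n : ℂ) + 1)))⁻¹ = (-1 : ℂ) ^ n * n.factorial := by
        rw [prod_neg_nat n, show (-(n : ℂ)) + ((n : ℂ) + 1) = 1 by ring,
          Complex.Gamma_one, inv_one, mul_one]
      have hee : (fun ν : ℂ =>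
          (∏ j ∈ Finset.range n, (ν + j)) * (Complex.Gamma (ν + ((n : ℂ) + 1)))⁻¹)
          =ᶠ[nhdsWithin (-(n : ℂ)) {(-(n : ℂ))}ᶜ]
          (fun ν : ℂ => (ν + n)⁻¹ * (Complex.Gamma ν)⁻¹) := by
        refine eventuallyEq_of_mem self_mem_nhdsWithin fun ν hν => ?_
        have hνn : ν + (n : ℂ) ≠ 0 := by
          intro h
          have h2 : ν = -(n : ℂ) := eq_neg_of_add_eq_zero_left h
          exact hν (by simp [h2])
        have h1 := invGamma_prod (n + 1) ν
        rw [Finset.prod_range_succ] at h1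
        have hcast : ((n + 1 : ℕ) : ℂ) = (n : ℂ) + 1 := by push_cast; ring
        rw [hcast] at h1
        rw [h1]
        field_simp
      have haux2 : Tendsto _ (nhds (-(n : ℂ)))
          (nhds ((∏ j ∈ Finset.range n, ((-(n : ℂ)) + j))
            * (Complex.Gamma ((-(n : ℂ)) + ((n : ℂ) + 1)))⁻¹)) := haux.tendsto
      rw [hval] at haux2
      exact Tendsto.congr' hee (haux2.mono_left nhdsWithin_le_nhds)
    -- decompose G / Γ
    have hGdecomp : ∀ ν : ℂ, G ν / Complex.Gamma ν
        = ((∫ τ in Set.Ioc (0 : ℝ) 1, (τ : ℂ) ^ (ν - 1) * g τ)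
            + (∑ k ∈ Finset.range (2 * n + d), b k / (ν + ((k : ℂ) - (d : ℂ)) / 2))
            + ∫ τ in Set.Ioi (1 : ℝ), (τ : ℂ) ^ (ν - 1) * F τ) * (Complex.Gamma ν)⁻¹
          + b (2 * n + d) * ((ν + n)⁻¹ * (Complex.Gamma ν)⁻¹) := by
      intro ν
      rw [hG' ν, Finset.sum_range_succ, hcK, div_eq_mul_inv]
      ring
    rw [show (fun ν : ℂ => G ν / Complex.Gamma ν) = _ from funext hGdecomp]
    have hA : ContinuousAt (fun ν : ℂ =>
        (∫ τ in Set.Ioc (0 : ℝ) 1, (τ : ℂ) ^ (ν - 1) * g τ)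
          + (∑ k ∈ Finset.range (2 * n + d), b k / (ν + ((k : ℂ) - (d : ℂ)) / 2))
          + ∫ τ in Set.Ioi (1 : ℝ), (τ : ℂ) ^ (ν - 1) * F τ) (-(n : ℂ)) :=
      (hI0cont.add hsumcont).add hIinfcont
    have t1 := (hA.mul hGinvCont.continuousAt).tendsto.mono_left
      (nhdsWithin_le_nhds (s := {(-(n : ℂ))}ᶜ))
    have t2 := hresidue.const_mul (b (2 * n + d))
    have t3 := t1.add t2
    convert t3 using 2
    show _ = _ * (fun s : ℂ => (Complex.Gamma s)⁻¹) (-(n : ℂ)) + _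
    simp [hGneg]
    ring
    rfl
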